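/- Let X and C be independent real-valued random variables on a probability space, and suppose the CDF F of X, defined by F(x) = P(X ≤ x), is continuous. Set T = min(X, C) and let Δ be the indicator of the event {X ≤ C}. Then E[ Δ·F(T) + (1 − Δ)·(1 − (1 − F(T))/2) ] = 1/2. -/

import Mathlib

open MeasureTheory Set

/-- A probability measure on ℝ whose CDF is continuous has no atoms. -/
lemma aux_noatom (μ : Measure ℝ) [IsProbabilityMeasure μ] (F : ℝ → ℝ)
    (hFμ : ∀ x, F x = (μ (Iic x)).toReal) (hFc : Continuous F) (a : ℝ) : μ {a} = 0 := by
  have hcdf : ProbabilityTheory.cdf μ = F := by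
    ext x
    rw [ProbabilityTheory.cdf_eq_real, hFμ, measureReal_def]
  have := (ProbabilityTheory.cdf μ).measure_singleton a
  rw [ProbabilityTheory.measure_cdf] at this
  rw [this, hcdf]
  have hl : Function.leftLim F a = F a :=
    leftLim_eq_of_tendsto ((hFc.tendsto a).mono_left nhdsWithin_le_nhds)
  simp [hl]

/-- Key identity: integrating the CDF over `Iic c` against an atomless probability
measure gives `F(c)^2/2`. -/
lemma aux_key (μ : Measure ℝ) [IsProbabilityMeasure μ] (hatom : ∀ a : ℝ, μ {a} = 0) (c : ℝ) :
    ∫ x in Iic c, (μ (Iic x)).toReal ∂μ = (μ (Iic c)).toReal ^ 2 / 2 := by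
  have hmono : Monotone fun x : ℝ => μ (Iic x) := fun a b h => measure_mono (Iic_subset_Iic.2 h)
  have hmeas : Measurable fun x : ℝ => μ (Iic x) := hmono.measurable
  set S₁ : Set (ℝ × ℝ) := {p | p.2 ≤ p.1 ∧ p.1 ≤ c} with hS₁def
  set S₂ : Set (ℝ × ℝ) := {p | p.1 ≤ p.2 ∧ p.2 ≤ c} with hS₂def
  have hS₁m : MeasurableSet S₁ :=
    (measurableSet_le measurable_snd measurable_fst).inter
      (measurable_fst measurableSet_Iic)
  have hS₂m : MeasurableSet S₂ :=
    (measurableSet_le measurable_fst measurable_snd).inter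
      (measurable_snd measurableSet_Iic)
  have hL : (μ.prod μ) S₁ = ∫⁻ x in Iic c, μ (Iic x) ∂μ := by
    rw [Measure.prod_apply hS₁m]
    rw [← lintegral_indicator measurableSet_Iic]
    congr 1
    ext x
    by_cases hx : x ≤ c
    · have : Prod.mk x ⁻¹' S₁ = Iic x := by ext y; simp [hS₁def, hx]
      simp [this, indicator_of_mem, hx]
    · have : Prod.mk x ⁻¹' S₁ = ∅ := by ext y; simp [hS₁def, hx]
      simp [this, indicator_of_notMem, hx]
  have hswap : (μ.prod μ) S₂ = (μ.prod μ) S₁ := by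
    have : Prod.swap ⁻¹' S₂ = S₁ := by ext p; simp [hS₁def, hS₂def]
    calc (μ.prod μ) S₂ = (Measure.map Prod.swap (μ.prod μ)) S₂ := by rw [Measure.prod_swap]
    _ = (μ.prod μ) (Prod.swap ⁻¹' S₂) := Measure.map_apply measurable_swap hS₂m
    _ = (μ.prod μ) S₁ := by rw [this]
  have hunion : S₁ ∪ S₂ = Iic c ×ˢ Iic c := by
    ext p
    simp only [hS₁def, hS₂def, mem_union, mem_setOf_eq, mem_prod, mem_Iic]
    constructor
    · rintro (⟨h1, h2⟩ | ⟨h1, h2⟩) <;> constructor <;> linarith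
    · rintro ⟨h1, h2⟩
      rcases le_total p.2 p.1 with h | h
      · exact Or.inl ⟨h, h1⟩
      · exact Or.inr ⟨h, h2⟩
  have hinter : (μ.prod μ) (S₁ ∩ S₂) = 0 := by
    have hsub : S₁ ∩ S₂ ⊆ {p : ℝ × ℝ | p.1 = p.2} := by
      rintro p ⟨⟨h1, _⟩, ⟨h2, _⟩⟩
      exact le_antisymm h2 h1
    have hdiag : (μ.prod μ) {p : ℝ × ℝ | p.1 = p.2} = 0 := by
      have hdm : MeasurableSet {p : ℝ × ℝ | p.1 = p.2} :=
        measurableSet_eq_fun measurable_fst measurable_snd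
      rw [Measure.prod_apply hdm]
      have : ∀ x : ℝ, Prod.mk x ⁻¹' {p : ℝ × ℝ | p.1 = p.2} = {x} := by
        intro x; ext y; simp [eq_comm]
      simp only [this]
      simp [hatom]
    exact measure_mono_null hsub hdiag
  have hsum : μ (Iic c) * μ (Iic c) = (μ.prod μ) S₁ + (μ.prod μ) S₂ := by
    have := measure_union_add_inter (μ := μ.prod μ) S₁ hS₂m
    rw [hunion, hinter, add_zero, Measure.prod_prod] at this
    exact this
  rw [hswap, hL] at hsum
  -- Now convert to real numbers
  have hfin : ∫⁻ x in Iic c, μ (Iic x) ∂μ ≠ ⊤ := by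
    rw [← hL]
    exact (measure_lt_top _ _).ne
  have hIic_fin : μ (Iic c) ≠ ⊤ := (measure_lt_top _ _).ne
  have hLHS : ∫ x in Iic c, (μ (Iic x)).toReal ∂μ = (∫⁻ x in Iic c, μ (Iic x) ∂μ).toReal := by
    apply integral_toReal hmeas.aemeasurable
    exact ae_of_all _ fun x => measure_lt_top _ _
  rw [hLHS]
  have := congrArg ENNReal.toReal hsum
  rw [ENNReal.toReal_mul, ENNReal.toReal_add hfin hfin] at this
  rw [sq]
  linarith
/-- Mean statement of Theorem 1: for independent real random variables `X`, `C` on a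
probability space, with `F x = P{X ≤ x}` continuous, `T = min X C` and `Δ = 1{X ≤ C}`,
the censored-data imputed rank `ℛ = Δ·F(T) + (1 − Δ)·(1 − (1 − F(T))/2)` has mean `1/2`. -/
theorem imputedRank_mean {Ω : Type*} [MeasurableSpace Ω] (P : Measure Ω)
    [IsProbabilityMeasure P]
    (X C : Ω → ℝ) (hX : Measurable X) (hC : Measurable C)
    (hXC : ProbabilityTheory.IndepFun X C P)
    (F : ℝ → ℝ) (hF : ∀ x, F x = (P {ω | X ω ≤ x}).toReal)
    (hFc : Continuous F) :
    ∫ ω, ((if X ω ≤ C ω then (1 : ℝ) else 0) * F (min (X ω) (C ω))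
        + (1 - if X ω ≤ C ω then (1 : ℝ) else 0)
          * (1 - (1 - F (min (X ω) (C ω))) / 2)) ∂P = 1 / 2 := by
  set μ : Measure ℝ := P.map X with hμdef
  set ν : Measure ℝ := P.map C with hνdef
  have : IsProbabilityMeasure μ := Measure.isProbabilityMeasure_map hX.aemeasurable
  have : IsProbabilityMeasure ν := Measure.isProbabilityMeasure_map hC.aemeasurable
  have hFμ : ∀ x, F x = (μ (Iic x)).toReal := by
    intro x
    rw [hF x, hμdef, Measure.map_apply hX measurableSet_Iic]
    rfl
  -- F is [0,1]-valued
  have hF0 : ∀ x, 0 ≤ F x := fun x => by rw [hFμ]; exact ENNReal.toReal_nonneg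
  have hF1 : ∀ x, F x ≤ 1 := fun x => by
    rw [hFμ]
    exact ENNReal.toReal_le_of_le_ofReal one_pos.le (by simpa using prob_le_one)
  set g : ℝ × ℝ → ℝ := fun p => if p.1 ≤ p.2 then F p.1 else (1 + F p.2) / 2 with hgdef
  have hgmeas : Measurable g :=
    Measurable.ite (measurableSet_le measurable_fst measurable_snd)
      (hFc.measurable.comp measurable_fst)
      ((continuous_const.add (hFc.comp continuous_snd)).measurable.div_const 2)
  have hgbound : ∀ p, ‖g p‖ ≤ 1 := by
    intro p
    rw [Real.norm_eq_abs, abs_le, hgdef]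
    constructor <;> (dsimp only; split_ifs)
    · linarith [hF0 p.1]
    · linarith [hF0 p.2]
    · exact hF1 p.1
    · linarith [hF1 p.2]
  -- Rewrite the integrand as g ∘ (X, C)
  have hptwise : ∀ ω, ((if X ω ≤ C ω then (1 : ℝ) else 0) * F (min (X ω) (C ω))
        + (1 - if X ω ≤ C ω then (1 : ℝ) else 0)
          * (1 - (1 - F (min (X ω) (C ω))) / 2)) = g (X ω, C ω) := by
    intro ω
    by_cases h : X ω ≤ C ω
    · simp [hgdef, h, min_eq_left h]
    · have h' : C ω ≤ X ω := (not_le.mp h).le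
      simp only [hgdef, h, if_false, min_eq_right h']
      ring
  simp only [hptwise]
  -- Push forward to the product measure
  have hmap : P.map (fun ω => (X ω, C ω)) = μ.prod ν :=
    (ProbabilityTheory.indepFun_iff_map_prod_eq_prod_map_map hX.aemeasurable
      hC.aemeasurable).mp hXC
  have hint : ∫ ω, g (X ω, C ω) ∂P = ∫ p, g p ∂(μ.prod ν) := by
    rw [← hmap, integral_map (hX.prodMk hC).aemeasurable hgmeas.aestronglyMeasurable]
  rw [hint]
  have hginteg : Integrable g (μ.prod ν) :=
    ⟨hgmeas.aestronglyMeasurable, HasFiniteIntegral.of_bounded (ae_of_all _ hgbound)⟩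
  rw [integral_prod_symm g hginteg]
  -- compute the inner integral: it is constantly 1/2
  have hatom : ∀ a : ℝ, μ {a} = 0 := aux_noatom μ F hFμ hFc
  have hinner : ∀ c : ℝ, ∫ x, g (x, c) ∂μ = 1 / 2 := by
    intro c
    have hgc_meas : Measurable fun x => g (x, c) := hgmeas.comp (measurable_id.prodMk measurable_const)
    have hgc_int : Integrable (fun x => g (x, c)) μ :=
      ⟨hgc_meas.aestronglyMeasurable,
        HasFiniteIntegral.of_bounded (ae_of_all _ fun x => hgbound (x, c))⟩
    have hsplit : ∫ x, g (x, c) ∂μ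
        = ∫ x in Iic c, g (x, c) ∂μ + ∫ x in Ioi c, g (x, c) ∂μ := by
      rw [← compl_Iic]
      exact (integral_add_compl measurableSet_Iic hgc_int).symm
    have h1 : ∫ x in Iic c, g (x, c) ∂μ = ∫ x in Iic c, (μ (Iic x)).toReal ∂μ := by
      apply setIntegral_congr_fun measurableSet_Iic
      intro x hx
      simp only [hgdef, if_pos (mem_Iic.mp hx)]
      exact hFμ x
    have h2 : ∫ x in Ioi c, g (x, c) ∂μ = (μ (Ioi c)).toReal * ((1 + F c) / 2) := by
      rw [setIntegral_congr_fun measurableSet_Ioi (g := fun _ => (1 + F c) / 2)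
        (fun x hx => by simp [hgdef, not_le.mpr (mem_Ioi.mp hx)])]
      simp [smul_eq_mul, measureReal_def]
    have hIoi : (μ (Ioi c)).toReal = 1 - F c := by
      have h := measure_add_measure_compl (μ := μ) (measurableSet_Iic (a := c))
      rw [compl_Iic, measure_univ] at h
      have := congrArg ENNReal.toReal h
      rw [ENNReal.toReal_add (measure_lt_top _ _).ne (measure_lt_top _ _).ne] at this
      simp only [ENNReal.toReal_one] at this
      rw [hFμ]
      linarith
    rw [hsplit, h1, h2, aux_key μ hatom c, ← hFμ, hIoi]
    ring
  simp only [hinner]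
  simp
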